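/- Let n ∈ ℕ and suppose the set {j ≥ 2 : ε_j(n) = 1} is a union of maximal blocks [a_i, b_i], i = 1,…,s, with a_1 ≤ b_1 < a_2 ≤ … ≤ b_s and b_i + 1 < a_{i+1}. Define H_n^{(1)}(t) = Σ_{j=2}^{|n|} ε_j(n)(D_{2^{j+1}}(t) − D_{2^j}(t)) l_{n(j-1)} (up to the Walsh factor w_n(t) of modulus 1). Then for every k and every t in the interval A_k := (2^{-(a_k+1)}, 2^{-a_k}), one has |H_n^{(1)}(t)| ≥ 2^{a_k - 1} · l_{n(a_k - 1)}. -/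

import Mathlib

open MeasureTheory Finset Filter Set

noncomputable section

/-- `k`-th binary digit of `x ∈ [0,1)`. -/
def xdigit (k : ℕ) (x : ℝ) : ℕ := ⌊x * 2 ^ (k + 1)⌋.toNat % 2

/-- Rademacher function `ρ_k(x) = (-1)^{x_k}`. -/
def rademacher (k : ℕ) (x : ℝ) : ℝ := (-1 : ℝ) ^ xdigit k x

/-- `j`-th binary digit of the natural number `n`. -/
def eps (j n : ℕ) : ℕ := n / 2 ^ j % 2

/-- Walsh-Paley function `w_n(x) = ∏_k ρ_k(x)^{n_k}`. -/
def walsh (n : ℕ) (x : ℝ) : ℝ := ∏ k ∈ Finset.range (n + 1), rademacher k x ^ eps k n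

/-- Walsh-Dirichlet kernel `D_n(x) = ∑_{m<n} w_m(x)`. -/
def Dker (n : ℕ) (x : ℝ) : ℝ := ∑ m ∈ Finset.range n, walsh m x

/-- `l_m = ∑_{k=1}^{m-1} 1/k`. -/
def lsum (m : ℕ) : ℝ := ∑ k ∈ Finset.Ico 1 m, (1 : ℝ) / k

/-- Logarithmic variation `V_L(n)`; note `n(k-1) = n % 2^k`. -/
def VL (n : ℕ) : ℝ :=
  (1 / (Nat.log 2 n : ℝ)) *
    ∑ k ∈ Finset.Icc 1 (Nat.log 2 n),
      |(eps k n : ℝ) - (eps (k + 1) n : ℝ)| * lsum (n % 2 ^ k)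

lemma eps_eq_zero {k n : ℕ} (h : n < 2 ^ k) : eps k n = 0 := by
  simp [eps, Nat.div_eq_of_lt h]

lemma walsh_eq_prod (x : ℝ) {n N : ℕ} (h : n < 2 ^ N) :
    walsh n x = ∏ k ∈ Finset.range N, rademacher k x ^ eps k n := by
  unfold walsh
  rcases le_total (n + 1) N with hle | hle
  · refine Finset.prod_subset (Finset.range_subset_range.2 hle) (fun j _ hj => ?_)
    have hjn : n < 2 ^ j := lt_of_lt_of_le (Nat.lt_two_pow_self (n := n))
      (Nat.pow_le_pow_right (by norm_num) (by simp at hj; omega))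
    rw [eps_eq_zero hjn, pow_zero]
  · refine (Finset.prod_subset (Finset.range_subset_range.2 hle) (fun j _ hj => ?_)).symm
    have hjn : n < 2 ^ j := lt_of_lt_of_le h
      (Nat.pow_le_pow_right (by norm_num) (by simpa using hj))
    rw [eps_eq_zero hjn, pow_zero]

lemma eps_two_pow_add_lt {m i k : ℕ} (hk : k < m) :
    eps k (2 ^ m + i) = eps k i := by
  unfold eps
  have h1 : (2:ℕ) ^ m + i = i + 2 ^ k * 2 ^ (m - k) := by
    rw [← pow_add]
    have : k + (m - k) = m := by omega
    rw [this]; omega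
  rw [h1, Nat.add_mul_div_left _ _ (Nat.two_pow_pos k)]
  have h2 : (2:ℕ) ^ (m - k) = 2 * 2 ^ (m - k - 1) := by
    rw [← pow_succ']
    congr 1; omega
  rw [h2, Nat.add_mul_mod_self_left]

lemma eps_two_pow_add_self {m i : ℕ} (hi : i < 2 ^ m) :
    eps m (2 ^ m + i) = 1 := by
  unfold eps
  have : (2 ^ m + i) / 2 ^ m = i / 2 ^ m + 1 := by
    rw [add_comm, Nat.add_div_right _ (Nat.two_pow_pos m)]
  rw [this, Nat.div_eq_of_lt hi]

lemma walsh_two_pow_add {m i : ℕ} (hi : i < 2 ^ m) (x : ℝ) :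
    walsh (2 ^ m + i) x = walsh i x * rademacher m x := by
  have hlt : 2 ^ m + i < 2 ^ (m + 1) := by rw [pow_succ]; omega
  rw [walsh_eq_prod x hlt, walsh_eq_prod x hi, Finset.prod_range_succ,
    eps_two_pow_add_self hi, pow_one]
  congr 1
  exact Finset.prod_congr rfl fun j hj => by
    rw [eps_two_pow_add_lt (Finset.mem_range.1 hj)]

lemma Dker_two_pow (m : ℕ) (x : ℝ) :
    Dker (2 ^ m) x = ∏ k ∈ Finset.range m, (1 + rademacher k x) := by
  induction m with
  | zero => simp [Dker, walsh, eps]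
  | succ m ih =>
    have h2 : (2:ℕ) ^ (m + 1) = 2 ^ m + 2 ^ m := by ring
    rw [Finset.prod_range_succ, ← ih, Dker, h2,
      ← Finset.sum_range_add_sum_Ico _ (Nat.le_add_right _ _),
      Finset.sum_Ico_eq_sum_range]
    simp only [Nat.add_sub_cancel_left]
    have : ∀ i ∈ Finset.range (2 ^ m), walsh (2 ^ m + i) x = walsh i x * rademacher m x :=
      fun i hi => walsh_two_pow_add (Finset.mem_range.1 hi) x
    rw [Finset.sum_congr rfl this, ← Finset.sum_mul]
    show Dker (2 ^ m) x + Dker (2 ^ m) x * rademacher m x = _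
    ring

lemma xdigit_zero {A k : ℕ} {t : ℝ} (ht0 : 0 ≤ t) (ht : t < ((2:ℝ) ^ A)⁻¹)
    (hk : k < A) : xdigit k t = 0 := by
  have h2 : (0:ℝ) < 2 ^ (k+1) := by positivity
  have hA : (0:ℝ) < 2 ^ A := by positivity
  have : t * 2 ^ (k+1) < 1 := by
    have h1 : t * 2 ^ (k+1) < ((2:ℝ) ^ A)⁻¹ * 2 ^ (k+1) := mul_lt_mul_of_pos_right ht h2
    have h3 : ((2:ℝ) ^ A)⁻¹ * 2 ^ (k+1) ≤ 1 := by
      rw [inv_mul_le_iff₀ hA, mul_one]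
      exact pow_le_pow_right₀ (by norm_num) (by omega)
    linarith
  have hfl : ⌊t * 2 ^ (k+1)⌋ = 0 := by
    rw [Int.floor_eq_zero_iff]; constructor <;> [positivity; exact this]
  simp [xdigit, hfl]

lemma xdigit_one {A : ℕ} {t : ℝ} (ht1 : ((2:ℝ) ^ (A+1))⁻¹ < t)
    (ht2 : t < ((2:ℝ) ^ A)⁻¹) : xdigit A t = 1 := by
  have h2 : (0:ℝ) < 2 ^ (A+1) := by positivity
  have hA : (0:ℝ) < 2 ^ A := by positivity
  have hgt : 1 < t * 2 ^ (A+1) := by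
    rw [← inv_mul_cancel₀ (ne_of_gt h2)]
    exact mul_lt_mul_of_pos_right ht1 h2
  have hlt : t * 2 ^ (A+1) < 2 := by
    have : t * 2 ^ (A+1) < ((2:ℝ) ^ A)⁻¹ * 2 ^ (A+1) := mul_lt_mul_of_pos_right ht2 h2
    have he : ((2:ℝ) ^ A)⁻¹ * 2 ^ (A+1) = 2 := by
      rw [pow_succ]; field_simp
    linarith
  have hfl : ⌊t * 2 ^ (A+1)⌋ = 1 := by
    rw [Int.floor_eq_iff]
    push_cast
    constructor <;> [exact le_of_lt hgt; norm_num [hlt]]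
  simp [xdigit, hfl]

lemma Dker_eval_le {A j : ℕ} {t : ℝ} (ht0 : 0 ≤ t) (ht : t < ((2:ℝ) ^ A)⁻¹)
    (hj : j ≤ A) : Dker (2 ^ j) t = 2 ^ j := by
  rw [Dker_two_pow]
  have h : ∀ m ∈ Finset.range j, (1 + rademacher m t) = 2 := fun m hm => by
    rw [rademacher, xdigit_zero ht0 ht (lt_of_lt_of_le (Finset.mem_range.1 hm) hj), pow_zero]
    norm_num
  rw [Finset.prod_congr rfl h, Finset.prod_const, Finset.card_range]

lemma Dker_eval_gt {A j : ℕ} {t : ℝ} (ht1 : ((2:ℝ) ^ (A+1))⁻¹ < t)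
    (ht2 : t < ((2:ℝ) ^ A)⁻¹) (hj : A < j) : Dker (2 ^ j) t = 0 := by
  rw [Dker_two_pow]
  apply Finset.prod_eq_zero (Finset.mem_range.2 hj)
  rw [rademacher, xdigit_one ht1 ht2, pow_one]
  ring

lemma lsum_nonneg (m : ℕ) : 0 ≤ lsum m :=
  Finset.sum_nonneg fun i _ => by positivity

lemma lsum_mono {m m' : ℕ} (h : m ≤ m') : lsum m ≤ lsum m' :=
  Finset.sum_le_sum_of_subset_of_nonneg (Finset.Ico_subset_Ico le_rfl h)
    fun i _ _ => by positivity

/-- lower bound for `H_n^{(1)}` on the intervals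
`A_k = (2^{-(a_k+1)}, 2^{-a_k})`.  The blocks `[a_i, b_i]`, `i = 1,…,s`, are the
maximal runs of 1-digits of `n` among indices `≥ 2`. -/
theorem statement7 (n s : ℕ) (hs : 1 ≤ s) (a b : ℕ → ℕ)
    (hab : ∀ i ∈ Finset.Icc 1 s, a i ≤ b i)
    (ha2 : 2 ≤ a 1)
    (hba : ∀ i ∈ Finset.Icc 1 (s - 1), b i + 1 < a (i + 1))
    (hdig : ∀ j : ℕ, 2 ≤ j → (eps j n = 1 ↔ ∃ i ∈ Finset.Icc 1 s, a i ≤ j ∧ j ≤ b i))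
    (k : ℕ) (hk : k ∈ Finset.Icc 1 s) (t : ℝ)
    (ht : t ∈ Set.Ioo (((2 : ℝ) ^ (a k + 1))⁻¹) (((2 : ℝ) ^ a k)⁻¹)) :
    (2 : ℝ) ^ (a k - 1) * lsum (n % 2 ^ a k) ≤
      |∑ j ∈ Finset.Icc 2 (Nat.log 2 n),
        (eps j n : ℝ) * (Dker (2 ^ (j + 1)) t - Dker (2 ^ j) t) * lsum (n % 2 ^ j)| := by
  obtain ⟨hk1, hks⟩ := Finset.mem_Icc.1 hk
  obtain ⟨ht1, ht2⟩ := ht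
  have ht0 : (0:ℝ) ≤ t := le_of_lt (lt_trans (by positivity) ht1)
  -- monotonicity of the block starts
  have hmono : ∀ p q : ℕ, 1 ≤ p → p ≤ q → q ≤ s → a p ≤ a q := by
    intro p q hp hpq
    induction q, hpq using Nat.le_induction with
    | base => intro _; exact le_rfl
    | succ q hq ih =>
      intro hqs
      have h1 : a p ≤ a q := ih (by omega)
      have h2 : b q + 1 < a (q + 1) := hba q (Finset.mem_Icc.2 ⟨by omega, by omega⟩)
      have h3 : a q ≤ b q := hab q (Finset.mem_Icc.2 ⟨by omega, by omega⟩)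
      omega
  set A := a k with hAdef
  have hA2 : 2 ≤ A := le_trans ha2 (hmono 1 k le_rfl hk1 hks)
  have hepsA : eps A n = 1 := (hdig A hA2).2 ⟨k, hk, le_rfl, hab k hk⟩
  have hn : 2 ^ A ≤ n := by
    have h1 : n / 2 ^ A ≠ 0 := fun h => by simp [eps, h] at hepsA
    have h2 : 1 ≤ n / 2 ^ A := Nat.one_le_iff_ne_zero.2 h1
    calc 2 ^ A = 2 ^ A * 1 := (mul_one _).symm
    _ ≤ 2 ^ A * (n / 2 ^ A) := Nat.mul_le_mul_left _ h2
    _ ≤ n := Nat.mul_div_le n (2 ^ A) |>.trans_eq' (by ring_nf)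
  have hn0 : n ≠ 0 := by
    have := Nat.two_pow_pos A
    omega
  have hlog : A ≤ Nat.log 2 n := (Nat.le_log_iff_pow_le one_lt_two hn0).2 hn
  -- digits below A stop at A-2
  have hsmall : ∀ j, 2 ≤ j → j + 1 ≤ A → eps j n = 1 → j + 2 ≤ A := by
    intro j hj2 hjA hepsj
    obtain ⟨i, hi, haij, hjbi⟩ := (hdig j hj2).1 hepsj
    rw [Finset.mem_Icc] at hi
    by_cases hik : k ≤ i
    · have := hmono k i hk1 hik hi.2
      omega
    · have h1 : b i + 1 < a (i + 1) := hba i (Finset.mem_Icc.2 ⟨hi.1, by omega⟩)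
      have h2 : a (i + 1) ≤ a k := hmono (i + 1) k (by omega) (by omega) hks
      omega
  set L := lsum (n % 2 ^ A) with hLdef
  have hL0 : 0 ≤ L := lsum_nonneg _
  set f : ℕ → ℝ :=
    fun j => (eps j n : ℝ) * (Dker (2 ^ (j + 1)) t - Dker (2 ^ j) t) * lsum (n % 2 ^ j)
    with hf
  have hDle : ∀ j, j ≤ A → Dker (2 ^ j) t = 2 ^ j := fun j hj => Dker_eval_le ht0 ht2 hj
  have hDgt : ∀ j, A < j → Dker (2 ^ j) t = 0 := fun j hj => Dker_eval_gt ht1 ht2 hj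
  have hstep1 : ∑ j ∈ Finset.Icc 2 (Nat.log 2 n), f j = ∑ j ∈ Finset.Icc 2 A, f j := by
    refine (Finset.sum_subset (Finset.Icc_subset_Icc_right hlog) fun j hj hj' => ?_).symm
    have hjA : A < j := by
      rw [Finset.mem_Icc] at hj hj'
      omega
    simp [hf, hDgt j hjA, hDgt (j + 1) (by omega)]
  have hA1 : A - 1 + 1 = A := by omega
  have hstep2 : ∑ j ∈ Finset.Icc 2 A, f j = (∑ j ∈ Finset.Icc 2 (A - 1), f j) + f A := by
    have h := Finset.sum_Icc_succ_top (a := 2) (b := A - 1) (by omega) f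
    rw [hA1] at h
    exact h
  have hfA : f A = -(2 ^ A * L) := by
    simp only [hf]
    rw [hepsA, hDgt (A + 1) (by omega), hDle A le_rfl, ← hLdef]
    push_cast
    ring
  -- bound the lower part
  have habs : ∀ j ∈ Finset.Icc 2 (A - 1),
      |f j| ≤ (if j + 2 ≤ A then (2:ℝ) ^ j * L else 0) := by
    intro j hj
    rw [Finset.mem_Icc] at hj
    rcases Nat.mod_two_eq_zero_or_one (n / 2 ^ j) with h0 | h1
    · have he0 : eps j n = 0 := h0
      have : |f j| = 0 := by simp [hf, he0]
      rw [this]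
      split_ifs
      · positivity
      · exact le_rfl
    · have he1 : eps j n = 1 := h1
      have hjA : j + 2 ≤ A := hsmall j hj.1 (by omega) he1
      rw [if_pos hjA]
      have hD1 : Dker (2 ^ (j + 1)) t = 2 ^ (j + 1) := hDle (j + 1) (by omega)
      have hD2 : Dker (2 ^ j) t = 2 ^ j := hDle j (by omega)
      have hls : lsum (n % 2 ^ j) ≤ L := by
        apply lsum_mono
        have : n % 2 ^ j = (n % 2 ^ A) % 2 ^ j :=
          (Nat.mod_mod_of_dvd n (pow_dvd_pow 2 (by omega))).symm
        rw [this]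
        exact Nat.mod_le _ _
      have hfj : f j = 2 ^ j * lsum (n % 2 ^ j) := by
        simp only [hf]
        rw [he1, hD1, hD2]
        push_cast
        ring
      rw [hfj, abs_of_nonneg (mul_nonneg (by positivity) (lsum_nonneg _))]
      exact mul_le_mul_of_nonneg_left hls (by positivity)
  have hR : |∑ j ∈ Finset.Icc 2 (A - 1), f j| ≤ 2 ^ (A - 1) * L := by
    have hgeo : ∑ j ∈ Finset.range (A - 1), (2:ℝ) ^ j = 2 ^ (A - 1) - 1 := by
      rw [geom_sum_eq (by norm_num)]
      norm_num
    calc |∑ j ∈ Finset.Icc 2 (A - 1), f j| ≤ ∑ j ∈ Finset.Icc 2 (A - 1), |f j| :=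
        Finset.abs_sum_le_sum_abs _ _
    _ ≤ ∑ j ∈ Finset.Icc 2 (A - 1), (if j + 2 ≤ A then (2:ℝ) ^ j * L else 0) :=
        Finset.sum_le_sum habs
    _ = ∑ j ∈ (Finset.Icc 2 (A - 1)).filter (fun j => j + 2 ≤ A), (2:ℝ) ^ j * L :=
        (Finset.sum_filter _ _).symm
    _ ≤ ∑ j ∈ Finset.range (A - 1), (2:ℝ) ^ j * L := by
        apply Finset.sum_le_sum_of_subset_of_nonneg
        · intro j hj
          rw [Finset.mem_filter, Finset.mem_Icc] at hj
          rw [Finset.mem_range]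
          omega
        · intro j _ _
          exact mul_nonneg (by positivity) hL0
    _ = (2 ^ (A - 1) - 1) * L := by rw [← Finset.sum_mul, hgeo]
    _ ≤ 2 ^ (A - 1) * L := by nlinarith
  rw [hstep1, hstep2]
  have h2A : (2:ℝ) ^ A = 2 * 2 ^ (A - 1) := by
    rw [← pow_succ']
    congr 1
    omega
  have hkey := abs_sub ((∑ j ∈ Finset.Icc 2 (A - 1), f j) + f A)
    (∑ j ∈ Finset.Icc 2 (A - 1), f j)
  have hsimp : ((∑ j ∈ Finset.Icc 2 (A - 1), f j) + f A) -
      (∑ j ∈ Finset.Icc 2 (A - 1), f j) = f A := by ring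
  rw [hsimp, hfA, abs_neg, abs_of_nonneg (mul_nonneg (by positivity) hL0), h2A] at hkey
  rw [hfA, h2A]
  linarith
end
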